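/- Let G = X·(I_t | B) where X is a k×t matrix over a field, I_t the t×t identity, B a t×m matrix, and suppose every t columns of G are linearly independent (so rank G = t). Then every square submatrix of B is invertible. -/

import Mathlib

theorem stmt_10 (F : Type) [Field F] (k t m : ℕ)
    (X : Matrix (Fin k) (Fin t) F) (B : Matrix (Fin t) (Fin m) F)
    (G : Matrix (Fin k) (Fin t ⊕ Fin m) F)
    (hG : G = X * Matrix.fromCols 1 B)
    (hcols : ∀ f : Fin t → (Fin t ⊕ Fin m), Function.Injective f →
      LinearIndependent F (fun i => G.transpose (f i))) :
    ∀ (l : ℕ) (rows : Fin l → Fin t) (cols : Fin l → Fin m),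
      Function.Injective rows → Function.Injective cols →
      (B.submatrix rows cols).det ≠ 0 := by
  intro l rows cols hrows hcolsinj
  have hl : l ≤ t := by
    have := Fintype.card_le_of_injective rows hrows
    simpa using this
  by_contra hdet
  obtain ⟨v, hv0, hv⟩ := (Matrix.exists_mulVec_eq_zero_iff).2 hdet
  have hv' : ∀ i, ∑ j, B (rows i) (cols j) * v j = 0 := by
    intro i
    have := congrFun hv i
    simpa [Matrix.mulVec, dotProduct] using this
  -- complement of range of rows
  set C : Finset (Fin t) := (Finset.image rows Finset.univ)ᶜ with hCdef
  have hCcard : C.card = t - l := by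
    simp [hCdef, Finset.card_compl, Finset.card_image_of_injective _ hrows]
  let e : Fin (t - l) ≃o {x // x ∈ C} := C.orderIsoOfFin hCcard
  have ht : (t - l) + l = t := Nat.sub_add_cancel hl
  let q : Fin t ≃ Fin (t - l) ⊕ Fin l := (finCongr ht.symm).trans finSumFinEquiv.symm
  let c : Fin t → F := fun s => -(∑ j, v j * B s (cols j))
  have hc0 : ∀ i, c (rows i) = 0 := by
    intro i
    have := hv' i
    simp only [c]
    rw [neg_eq_zero, ← this]
    exact Finset.sum_congr rfl fun j _ => mul_comm _ _
  let f : Fin t → Fin t ⊕ Fin m :=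
    fun i => Sum.elim (fun a => Sum.inl ((e a : {x // x ∈ C}) : Fin t))
      (fun b => Sum.inr (cols b)) (q i)
  have hf : Function.Injective f := by
    intro i i' h
    apply q.injective
    rcases hqi : q i with a | b <;> rcases hqi' : q i' with a' | b' <;>
      simp only [f, hqi, hqi', Sum.elim_inl, Sum.elim_inr] at h
    · have : (e a : {x // x ∈ C}) = e a' := Subtype.coe_injective (Sum.inl.inj h)
      rw [e.injective this]
    · exact absurd h (by simp)
    · exact absurd h (by simp)
    · rw [hcolsinj (Sum.inr.inj h)]
  have hli := hcols f hf
  rw [Fintype.linearIndependent_iff] at hli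
  -- coefficients
  let g : Fin t → F := fun i => Sum.elim (fun a => c ((e a : {x // x ∈ C}) : Fin t))
      (fun b => v b) (q i)
  have hGinl : ∀ r s, G r (Sum.inl s) = X r s := by
    intro r s
    simp [hG, Matrix.mul_fromCols]
  have hGinr : ∀ r (j : Fin m), G r (Sum.inr j) = ∑ s, X r s * B s j := by
    intro r j
    simp [hG, Matrix.mul_fromCols, Matrix.mul_apply]
  have key : ∀ r, ∑ i, g i * G r (f i) = 0 := by
    intro r
    have h1 : ∑ i, g i * G r (f i)
        = (∑ a : Fin (t - l), c ((e a : {x // x ∈ C}) : Fin t) * X r ((e a : {x // x ∈ C}) : Fin t))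
          + ∑ b : Fin l, v b * ∑ s, X r s * B s (cols b) := by
      rw [Fintype.sum_equiv q (fun i => g i * G r (f i))
        (Sum.elim (fun a => c ((e a : {x // x ∈ C}) : Fin t) * X r ((e a : {x // x ∈ C}) : Fin t))
          (fun b => v b * ∑ s, X r s * B s (cols b)))
        (by intro i; rcases hqi : q i with a | b <;> simp [g, f, hqi, hGinl, hGinr])]
      exact Fintype.sum_sum_type _
    have h2 : (∑ a : Fin (t - l), c ((e a : {x // x ∈ C}) : Fin t) * X r ((e a : {x // x ∈ C}) : Fin t))
        = ∑ s, c s * X r s := by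
      rw [show (∑ a : Fin (t - l), c ((e a : {x // x ∈ C}) : Fin t) * X r ((e a : {x // x ∈ C}) : Fin t))
          = ∑ x : {x // x ∈ C}, c (x : Fin t) * X r (x : Fin t) from
        Equiv.sum_comp e.toEquiv (fun x : {x // x ∈ C} => c (x : Fin t) * X r (x : Fin t))]
      rw [Finset.sum_coe_sort C (fun s => c s * X r s)]
      refine Finset.sum_subset (Finset.subset_univ C) ?_
      intro s _ hs
      have : s ∈ Finset.image rows Finset.univ := by
        simpa [hCdef] using hs
      obtain ⟨i, -, hi⟩ := Finset.mem_image.mp this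
      rw [← hi, hc0 i, zero_mul]
    have h3 : (∑ b : Fin l, v b * ∑ s, X r s * B s (cols b))
        = ∑ s, X r s * -(c s) := by
      simp only [Finset.mul_sum]
      rw [Finset.sum_comm]
      refine Finset.sum_congr rfl fun s _ => ?_
      simp only [c, neg_neg, Finset.mul_sum]
      exact Finset.sum_congr rfl fun b _ => by ring
    rw [h1, h2, h3, ← Finset.sum_add_distrib]
    refine Finset.sum_eq_zero fun s _ => by ring
  have hsum : ∑ i, g i • G.transpose (f i) = 0 := by
    funext r
    simpa [Finset.sum_apply, Matrix.transpose_apply] using key r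
  have hgz : ∀ i, g i = 0 := hli g hsum
  obtain ⟨j, hj⟩ := Function.ne_iff.mp hv0
  apply hj
  have := hgz (q.symm (Sum.inr j))
  simpa [g, Equiv.apply_symm_apply] using this
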